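/- If Γ is a constant sequence of formulae and A is a constant formula, then the sequent Γ ⊢ A is derivable in the system S. -/
import Mathlib

/-- Formulae of the system `S`: built from propositional letters and the constant `I`
(`unit`) with the binary connectives `⊗` (`tens`) and `→` (`imp`). -/
inductive Fml : Type
  | atom : ℕ → Fml
  | unit : Fml
  | tens : Fml → Fml → Fml
  | imp : Fml → Fml → Fml

/-- Derivability in the system `S`.  Sequents are `Γ ⊢ A` with `Γ` a finite list of
formulae.  Axioms: `A ⊢ A` and `⊢ I`; structural rules: weakening, interchange and cut;
operational rules: `⊗⊢`, `⊢⊗`, `→⊢` and `⊢→`. -/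
inductive SDeriv : List Fml → Fml → Prop
  | ax (A : Fml) : SDeriv [A] A
  | axI : SDeriv [] Fml.unit
  | weak {Γ A} : SDeriv Γ A → SDeriv (Fml.unit :: Γ) A
  | exch {Γ Δ : List Fml} {A B C} :
      SDeriv (Γ ++ A :: B :: Δ) C → SDeriv (Γ ++ B :: A :: Δ) C
  | cut {Γ Δ Θ : List Fml} {A B} :
      SDeriv Γ A → SDeriv (Δ ++ A :: Θ) B → SDeriv (Δ ++ Γ ++ Θ) B
  | tensL {Γ Δ : List Fml} {A B C} :
      SDeriv (Γ ++ A :: B :: Δ) C → SDeriv (Γ ++ (A.tens B) :: Δ) C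
  | tensR {Γ Δ : List Fml} {A B} :
      SDeriv Γ A → SDeriv Δ B → SDeriv (Γ ++ Δ) (A.tens B)
  | impL {Γ Δ : List Fml} {A B C} :
      SDeriv Γ A → SDeriv (B :: Δ) C → SDeriv (Γ ++ (A.imp B) :: Δ) C
  | impR {Γ : List Fml} {A B} :
      SDeriv (A :: Γ) B → SDeriv Γ (A.imp B)

/-- A formula is constant when it contains no propositional letters. -/
def Fml.isConst : Fml → Prop
  | .atom _ => False
  | .unit => True
  | .tens A B => A.isConst ∧ B.isConst
  | .imp A B => A.isConst ∧ B.isConst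

lemma const_both (A : Fml) (h : A.isConst) :
    SDeriv [] A ∧ SDeriv [A] Fml.unit := by
  induction A with
  | atom n => exact absurd h id
  | unit => exact ⟨SDeriv.axI, SDeriv.ax _⟩
  | tens A B ihA ihB =>
    obtain ⟨hA, hB⟩ := h
    obtain ⟨hA1, hA2⟩ := ihA hA
    obtain ⟨hB1, hB2⟩ := ihB hB
    refine ⟨SDeriv.tensR hA1 hB1, ?_⟩
    have hAB : SDeriv [A, B] Fml.unit := by
      have := SDeriv.cut (Δ := []) (Θ := [B]) hA2 (SDeriv.weak hB2)
      simpa using this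
    have := SDeriv.tensL (Γ := []) (Δ := []) (A := A) (B := B) hAB
    simpa using this
  | imp A B ihA ihB =>
    obtain ⟨hA, hB⟩ := h
    obtain ⟨hA1, hA2⟩ := ihA hA
    obtain ⟨hB1, hB2⟩ := ihB hB
    constructor
    · refine SDeriv.impR ?_
      have := SDeriv.cut (Δ := []) (Θ := []) hA2 (SDeriv.weak hB1)
      simpa using this
    · have := SDeriv.impL (Γ := []) (Δ := []) hA1 hB2
      simpa using this

/-- If `Γ` is a constant sequence and `A` a constant formula, then `Γ ⊢ A` is
derivable in `S`. -/
theorem constant_sequent_derivable (Γ : List Fml) (A : Fml)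
    (hΓ : ∀ B ∈ Γ, B.isConst) (hA : A.isConst) : SDeriv Γ A := by
  induction Γ with
  | nil => exact (const_both A hA).1
  | cons B Γ ih =>
    have hB := (const_both B (hΓ B (by simp))).2
    have hrest := ih (fun C hC => hΓ C (by simp [hC]))
    have := SDeriv.cut (Δ := []) (Θ := Γ) hB (SDeriv.weak hrest)
    simpa using this
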